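/- Let n ≥ 2 and suppose A is an independent set in the Birkhoff graph B_{⌈n/2⌉}. Then A' := {(σ, (σ')⁻¹τ) : σ ∈ S_{⌊n/2⌋}, τ ∈ A} is an independent set in B_n, where σ' is the extension of σ to [⌈n/2⌉] fixing ⌈n/2⌉ when n is odd, and S_{⌊n/2⌋} × S_{⌈n/2⌉} is included naturally in S_n. In particular |A'| = ⌊n/2⌋! · |A|. -/

import Mathlib

open Equiv Finset

/-- `A` is an independent set of the Birkhoff graph `B_m`: no two of its elements differ
by a single cycle. -/
def IsIndep {m : ℕ} (A : Finset (Equiv.Perm (Fin m))) : Prop :=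
  ∀ σ ∈ A, ∀ τ ∈ A, ¬ (σ * τ⁻¹).IsCycle

/-- The natural inclusion of `S_{⌊n/2⌋} × S_{⌈n/2⌉}` in `S_n`. -/
noncomputable def emb (n : ℕ) :
    Equiv.Perm (Fin (n / 2)) × Equiv.Perm (Fin (n - n / 2)) → Equiv.Perm (Fin n) :=
  fun st => (Equiv.permCongr (finSumFinEquiv.trans (finCongr (by omega))))
    (Equiv.sumCongr st.1 st.2)

/-- The natural extension of `σ ∈ S_{⌊n/2⌋}` to `S_{⌈n/2⌉}` (fixing the possibly extra
point). -/
noncomputable def extPerm (n : ℕ) (σ : Equiv.Perm (Fin (n / 2))) :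
    Equiv.Perm (Fin (n - n / 2)) :=
  σ.viaFintypeEmbedding (Fin.castLEEmb (by omega))

/-- `permCongr` as a `MulEquiv`. -/
def permCongrMul {α β : Type*} (e : α ≃ β) : Equiv.Perm α ≃* Equiv.Perm β where
  toEquiv := e.permCongr
  map_mul' p q := by
    ext x
    simp [Equiv.Perm.mul_apply]

lemma isCycle_permCongr_of {α β : Type*} (e : α ≃ β) {g : Equiv.Perm α}
    (h : g.IsCycle) : Equiv.Perm.IsCycle (e.permCongr g) := by
  obtain ⟨x, hx, hsc⟩ := h
  have key : ∀ k : ℤ, (e.permCongr g) ^ k = e.permCongr (g ^ k) := fun k =>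
    (map_zpow (permCongrMul e) g k).symm
  refine ⟨e x, by simpa using fun h => hx (e.injective h), fun y hy => ?_⟩
  have hgy : g (e.symm y) ≠ e.symm y := by
    intro h
    apply hy
    simp only [Equiv.permCongr_apply, h, Equiv.apply_symm_apply]
  obtain ⟨k, hk⟩ := hsc hgy
  exact ⟨k, by rw [key]; simp [hk]⟩

lemma sumCongr_isCycle_cases {α β : Type*} {p : Equiv.Perm α} {q : Equiv.Perm β}
    (h : Equiv.Perm.IsCycle (Equiv.sumCongr p q)) :
    (p.IsCycle ∧ q = 1) ∨ (p = 1 ∧ q.IsCycle) := by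
  have key : ∀ k : ℤ, (Equiv.sumCongr p q) ^ k = Equiv.sumCongr (p ^ k) (q ^ k) := by
    intro k
    have := map_zpow (Equiv.Perm.sumCongrHom α β) (p, q) k
    simpa [Equiv.Perm.sumCongrHom] using this.symm
  obtain ⟨x, hx, hsc⟩ := h
  cases x with
  | inl a =>
    have ha : p a ≠ a := by
      intro h
      exact hx (by simp [h])
    left
    constructor
    · refine ⟨a, ha, fun y hy => ?_⟩
      have : (Equiv.sumCongr p q) (Sum.inl y) ≠ Sum.inl y := by simp [hy]
      obtain ⟨k, hk⟩ := hsc this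
      rw [key] at hk
      simp only [Equiv.sumCongr_apply, Sum.map_inl] at hk
      exact ⟨k, Sum.inl.inj hk⟩
    · ext b
      by_contra hb
      have : (Equiv.sumCongr p q) (Sum.inr b) ≠ Sum.inr b := by
        simpa using fun h => hb h
      obtain ⟨k, hk⟩ := hsc this
      rw [key] at hk
      simp at hk
  | inr b =>
    have hb : q b ≠ b := by
      intro h
      exact hx (by simp [h])
    right
    constructor
    · ext a
      by_contra ha
      have : (Equiv.sumCongr p q) (Sum.inl a) ≠ Sum.inl a := by
        simpa using fun h => ha h
      obtain ⟨k, hk⟩ := hsc this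
      rw [key] at hk
      simp at hk
    · refine ⟨b, hb, fun y hy => ?_⟩
      have : (Equiv.sumCongr p q) (Sum.inr y) ≠ Sum.inr y := by simp [hy]
      obtain ⟨k, hk⟩ := hsc this
      rw [key] at hk
      simp only [Equiv.sumCongr_apply, Sum.map_inr] at hk
      exact ⟨k, Sum.inr.inj hk⟩

lemma extPerm_mul (n : ℕ) (σ τ : Equiv.Perm (Fin (n / 2))) :
    extPerm n (σ * τ) = extPerm n σ * extPerm n τ := by
  simp [extPerm, Equiv.Perm.viaFintypeEmbedding, Equiv.Perm.extendDomain_mul]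
  exact (Equiv.Perm.extendDomain_mul _ _ _).symm

lemma extPerm_inv (n : ℕ) (σ : Equiv.Perm (Fin (n / 2))) :
    extPerm n σ⁻¹ = (extPerm n σ)⁻¹ := by
  simp [extPerm, Equiv.Perm.viaFintypeEmbedding, Equiv.Perm.extendDomain_inv]
  exact (Equiv.Perm.extendDomain_inv _ _).symm

lemma extPerm_isCycle (n : ℕ) {σ : Equiv.Perm (Fin (n / 2))} (h : σ.IsCycle) :
    (extPerm n σ).IsCycle :=
  h.extendDomain _

lemma emb_injective (n : ℕ) : Function.Injective (emb n) := by
  intro x y h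
  simp only [emb] at h
  exact Equiv.Perm.sumCongrHom_injective ((Equiv.permCongr _).injective h)

/-- from an independent set `A` of `B_{⌈n/2⌉}`, the set
`A' = {(σ, (σ')⁻¹ τ) : σ ∈ S_{⌊n/2⌋}, τ ∈ A}` is independent in `B_n` and has
cardinality `⌊n/2⌋! · |A|`. -/
theorem stmt13 (n : ℕ) (hn : 2 ≤ n) (A : Finset (Equiv.Perm (Fin (n - n / 2))))
    (hA : IsIndep A) :
    IsIndep ((Finset.univ ×ˢ A).image fun st => emb n (st.1, (extPerm n st.1)⁻¹ * st.2)) ∧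
    ((Finset.univ ×ˢ A).image fun st => emb n (st.1, (extPerm n st.1)⁻¹ * st.2)).card
      = (n / 2).factorial * A.card := by
  have emb_hom : ∀ st, emb n st =
      (permCongrMul (finSumFinEquiv.trans (finCongr (by omega : n / 2 + (n - n / 2) = n))))
        (Equiv.Perm.sumCongrHom _ _ st) := fun _ => rfl
  have emb_mul : ∀ a b c d, emb n (a, b) * emb n (c, d) = emb n (a * c, b * d) := by
    intro a b c d
    rw [emb_hom, emb_hom, emb_hom, ← map_mul, ← map_mul, Prod.mk_mul_mk]
  have emb_inv : ∀ a b, (emb n (a, b))⁻¹ = emb n (a⁻¹, b⁻¹) := by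
    intro a b
    rw [emb_hom, emb_hom, ← map_inv, ← map_inv, Prod.inv_mk]
  have hinj : Function.Injective
      (fun st : Equiv.Perm (Fin (n / 2)) × Equiv.Perm (Fin (n - n / 2)) =>
        emb n (st.1, (extPerm n st.1)⁻¹ * st.2)) := by
    intro ⟨a, b⟩ ⟨c, d⟩ h
    have h2 := emb_injective n h
    have h3 : a = c := congrArg Prod.fst h2
    have h4 : (extPerm n a)⁻¹ * b = (extPerm n c)⁻¹ * d := congrArg Prod.snd h2
    subst h3
    simpa using mul_left_cancel h4
  constructor
  · intro x hx y hy hc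
    simp only [Finset.mem_image, Finset.mem_product, Finset.mem_univ, true_and,
      Prod.exists] at hx hy
    obtain ⟨σ₁, τ₁, hτ₁, rfl⟩ := hx
    obtain ⟨σ₂, τ₂, hτ₂, rfl⟩ := hy
    rw [emb_inv, emb_mul] at hc
    simp only [emb] at hc
    set E := (finSumFinEquiv.trans (finCongr (by omega : n / 2 + (n - n / 2) = n))) with hE
    set w := (extPerm n σ₁)⁻¹ * τ₁ * ((extPerm n σ₂)⁻¹ * τ₂)⁻¹ with hw
    have hsum : Equiv.Perm.IsCycle (Equiv.sumCongr (σ₁ * σ₂⁻¹) w) := by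
      have h2 := isCycle_permCongr_of E.symm hc
      rwa [← Equiv.permCongr_symm, Equiv.symm_apply_apply] at h2
    rcases sumCongr_isCycle_cases hsum with ⟨hcyc, hone⟩ | ⟨hone, hcyc⟩
    · have key : τ₁ * τ₂⁻¹ = extPerm n σ₁ * (extPerm n σ₂)⁻¹ := by
        have h := hone
        rw [hw, mul_inv_rev, inv_inv] at h
        calc τ₁ * τ₂⁻¹
            = extPerm n σ₁ * ((extPerm n σ₁)⁻¹ * τ₁ *
              (τ₂⁻¹ * extPerm n σ₂)) * (extPerm n σ₂)⁻¹ := by group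
          _ = extPerm n σ₁ * (extPerm n σ₂)⁻¹ := by rw [h]; group
      rw [← extPerm_inv, ← extPerm_mul] at key
      exact hA τ₁ hτ₁ τ₂ hτ₂ (key ▸ extPerm_isCycle n hcyc)
    · have hσ : σ₁ = σ₂ := by
        rwa [mul_inv_eq_one] at hone
      subst hσ
      have key : τ₁ * τ₂⁻¹ = extPerm n σ₁ * w * (extPerm n σ₁)⁻¹ := by
        rw [hw]; group
      exact hA τ₁ hτ₁ τ₂ hτ₂ (key ▸ hcyc.conj)
  · rw [Finset.card_image_of_injective _ hinj, Finset.card_product, Finset.card_univ,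
      Fintype.card_perm, Fintype.card_fin]
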